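/- Fix N ∈ ℕ. For every n ∈ {0,…,N} and every x ∈ {0,…,N}, Λ̂_N[K_{N,n}](x) = 2^{−n} n! C(x,n), i.e., Σ_{y=x}^{N} 2^{x−N} C(N−x, y−x) K_{N,n}(y) = 2^{−n} n! C(x,n). -/

import Mathlib

open Finset

-- trinomial revision: C(A,l)C(A-l,b) = C(A,b)C(A-b,l)
lemma trinom (A l b : ℕ) :
    A.choose l * (A - l).choose b = A.choose b * (A - b).choose l := by
  by_cases h : l + b ≤ A
  · have h1 := Nat.choose_mul (n := A) (k := l + b) (s := l) (Nat.le_add_right _ _)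
    have h2 := Nat.choose_mul (n := A) (k := l + b) (s := b) (Nat.le_add_left _ _)
    rw [Nat.add_sub_cancel_left] at h1
    rw [Nat.add_sub_cancel] at h2
    have h3 : (l + b).choose l = (l + b).choose b := by
      rw [← Nat.choose_symm (Nat.le_add_right _ _), Nat.add_sub_cancel_left]
    rw [← h1, ← h2, h3]
  · have z1 : A.choose l * (A - l).choose b = 0 := by
      by_cases hl : l ≤ A
      · have : A - l < b := by omega
        rw [Nat.choose_eq_zero_of_lt this, Nat.mul_zero]
      · rw [Nat.choose_eq_zero_of_lt (by omega), Nat.zero_mul]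
    have z2 : A.choose b * (A - b).choose l = 0 := by
      by_cases hb : b ≤ A
      · have : A - b < l := by omega
        rw [Nat.choose_eq_zero_of_lt this, Nat.mul_zero]
      · rw [Nat.choose_eq_zero_of_lt (by omega), Nat.zero_mul]
    rw [z1, z2]

lemma sum_choose_ext (c A : ℕ) (h : c ≤ A) :
    ∑ l ∈ range (A + 1), c.choose l = 2 ^ c := by
  rw [← Nat.sum_range_choose c]
  symm
  apply Finset.sum_subset (Finset.range_subset_range.2 (by omega))
  intro l _ hl
  exact Nat.choose_eq_zero_of_lt (by simp at hl ⊢; omega)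

lemma sublemmaA (M m i : ℕ) (him : i ≤ m) :
    ∑ k ∈ range (M + 1), M.choose k * (k.choose i * (M - k).choose (m - i)) =
      2 ^ (M - m) * (M.choose m * m.choose i) := by
  by_cases hiM : i ≤ M
  · have step1 : ∑ k ∈ range (M + 1), M.choose k * (k.choose i * (M - k).choose (m - i)) =
        ∑ k ∈ Finset.Ico i (M + 1), M.choose k * (k.choose i * (M - k).choose (m - i)) := by
      rw [Finset.range_eq_Ico, ← Finset.sum_Ico_consecutive _ (Nat.zero_le i) (by omega)]
      have : ∑ k ∈ Finset.Ico 0 i, M.choose k * (k.choose i * (M - k).choose (m - i)) = 0 := by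
        apply Finset.sum_eq_zero
        intro k hk
        simp only [Finset.mem_Ico] at hk
        rw [Nat.choose_eq_zero_of_lt hk.2, Nat.zero_mul, Nat.mul_zero]
      rw [this, Nat.zero_add]
    rw [step1, Finset.sum_Ico_eq_sum_range]
    have hrange : M + 1 - i = (M - i) + 1 := by omega
    rw [hrange]
    have step2 : ∀ l ∈ range ((M - i) + 1),
        M.choose (i + l) * ((i + l).choose i * (M - (i + l)).choose (m - i)) =
        M.choose i * ((M - i).choose (m - i) * (M - i - (m - i)).choose l) := by
      intro l hl
      simp only [Finset.mem_range] at hl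
      have hil : i + l ≤ M := by omega
      have h1 := Nat.choose_mul (n := M) (k := i + l) (s := i) (Nat.le_add_right _ _)
      rw [Nat.add_sub_cancel_left] at h1
      have h2 : M - (i + l) = (M - i) - l := by omega
      calc M.choose (i + l) * ((i + l).choose i * (M - (i + l)).choose (m - i))
          = (M.choose (i + l) * (i + l).choose i) * (M - (i + l)).choose (m - i) := by ring
        _ = (M.choose i * (M - i).choose l) * ((M - i) - l).choose (m - i) := by rw [h1, h2]
        _ = M.choose i * ((M - i).choose l * ((M - i) - l).choose (m - i)) := by ring
        _ = M.choose i * ((M - i).choose (m - i) * (M - i - (m - i)).choose l) := by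
            rw [trinom]
    rw [Finset.sum_congr rfl step2, ← Finset.mul_sum]
    have step3 : ∑ l ∈ range ((M - i) + 1), (M - i).choose (m - i) * (M - i - (m - i)).choose l
        = (M - i).choose (m - i) * 2 ^ (M - i - (m - i)) := by
      rw [← Finset.mul_sum, sum_choose_ext _ _ (by omega)]
    rw [step3]
    by_cases hm : m ≤ M
    · have he : M - i - (m - i) = M - m := by omega
      have h4 := Nat.choose_mul (n := M) (k := m) (s := i) him
      rw [he, h4]; ring
    · have : (M - i).choose (m - i) = 0 := Nat.choose_eq_zero_of_lt (by omega)
      rw [this, Nat.choose_eq_zero_of_lt (show M < m by omega)]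
      ring
  · have z1 : ∑ k ∈ range (M + 1), M.choose k * (k.choose i * (M - k).choose (m - i)) = 0 := by
      apply Finset.sum_eq_zero
      intro k hk
      simp only [Finset.mem_range] at hk
      rw [Nat.choose_eq_zero_of_lt (show k < i by omega), Nat.zero_mul, Nat.mul_zero]
    rw [z1, Nat.choose_eq_zero_of_lt (show M < m by omega)]
    ring

lemma alt_sum (m : ℕ) :
    ∑ i ∈ range (m + 1), (-1 : ℝ) ^ (m - i) * m.choose i =
      if m = 0 then 1 else 0 := by
  have step : ∀ i ∈ range (m + 1),
      (-1 : ℝ) ^ (m - i) * m.choose i = (-1) ^ m * ((-1) ^ i * m.choose i) := by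
    intro i hi
    simp only [Finset.mem_range] at hi
    have h1 : (-1 : ℝ) ^ (m - i) = (-1) ^ m * (-1) ^ i := by
      rw [← pow_add]
      have : (-1 : ℝ) ^ (m - i) * ((-1) ^ (2 * i)) = (-1) ^ (m + i) := by
        rw [← pow_add]
        congr 1
        omega
      rw [← this, pow_mul]
      norm_num
    rw [h1]; ring
  rw [Finset.sum_congr rfl step, ← Finset.mul_sum]
  have hZ : ∑ i ∈ range (m + 1), ((-1 : ℝ) ^ i * m.choose i) =
      ((if m = 0 then 1 else 0 : ℤ) : ℝ) := by
    rw [← Int.alternating_sum_range_choose]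
    push_cast
    rfl
  rw [hZ]
  by_cases hm : m = 0 <;> simp [hm]

lemma key (M x n : ℕ) :
    ∑ k ∈ range (M + 1), ∑ j ∈ range (n + 1),
      (M.choose k : ℝ) * ((-1) ^ (n - j) * ((x + k).choose j) * ((M - k).choose (n - j))) =
      2 ^ M * (x.choose n : ℝ) := by
  rw [Finset.sum_comm]
  -- expand (x+k).choose j by Vandermonde
  have vand : ∀ j k : ℕ, ((x + k).choose j : ℝ) =
      ∑ a ∈ range (j + 1), (x.choose a : ℝ) * (k.choose (j - a)) := by
    intro j k
    rw [Nat.add_choose_eq, Finset.Nat.sum_antidiagonal_eq_sum_range_succ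
      (f := fun a b => x.choose a * k.choose b)]
    push_cast
    rfl
  have step1 : ∀ j ∈ range (n + 1),
      ∑ k ∈ range (M + 1),
        (M.choose k : ℝ) * ((-1) ^ (n - j) * ((x + k).choose j) * ((M - k).choose (n - j))) =
      ∑ a ∈ range (j + 1), (-1 : ℝ) ^ (n - j) * (x.choose a) *
        (2 ^ (M - (n - a)) * (M.choose (n - a)) * ((n - a).choose (j - a))) := by
    intro j hj
    simp only [Finset.mem_range] at hj
    have : ∀ k ∈ range (M + 1),
        (M.choose k : ℝ) * ((-1) ^ (n - j) * ((x + k).choose j) * ((M - k).choose (n - j))) =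
        ∑ a ∈ range (j + 1), ((-1 : ℝ) ^ (n - j) * (x.choose a)) *
          ((M.choose k : ℝ) * ((k.choose (j - a)) * ((M - k).choose (n - j)))) := by
      intro k hk
      rw [vand j k]
      simp only [Finset.mul_sum, Finset.sum_mul]
      apply Finset.sum_congr rfl
      intro a _
      ring
    rw [Finset.sum_congr rfl this, Finset.sum_comm]
    apply Finset.sum_congr rfl
    intro a ha
    simp only [Finset.mem_range] at ha
    rw [← Finset.mul_sum]
    have hnj : n - j = (n - a) - (j - a) := by omega
    have hA : ∑ k ∈ range (M + 1),
        (M.choose k : ℝ) * ((k.choose (j - a)) * ((M - k).choose (n - j))) =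
        ((2 ^ (M - (n - a)) * (M.choose (n - a) * (n - a).choose (j - a)) : ℕ) : ℝ) := by
      rw [← sublemmaA M (n - a) (j - a) (by omega)]
      rw [hnj]
      push_cast
      rfl
    rw [hA]
    push_cast
    ring
  rw [Finset.sum_congr rfl step1]
  -- swap j and a
  have swap : ∑ j ∈ range (n + 1), ∑ a ∈ range (j + 1),
      (-1 : ℝ) ^ (n - j) * (x.choose a) *
        (2 ^ (M - (n - a)) * (M.choose (n - a)) * ((n - a).choose (j - a))) =
      ∑ a ∈ range (n + 1), ∑ j ∈ Finset.Ico a (n + 1),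
      (-1 : ℝ) ^ (n - j) * (x.choose a) *
        (2 ^ (M - (n - a)) * (M.choose (n - a)) * ((n - a).choose (j - a))) := by
    rw [Finset.sum_sigma', Finset.sum_sigma']
    apply Finset.sum_nbij' (fun p => ⟨p.2, p.1⟩) (fun p => ⟨p.2, p.1⟩) <;>
      simp +contextual [Finset.mem_sigma, Finset.mem_range, Finset.mem_Ico] <;> omega
  rw [swap]
  have inner : ∀ a ∈ range (n + 1),
      ∑ j ∈ Finset.Ico a (n + 1),
      (-1 : ℝ) ^ (n - j) * (x.choose a) *
        (2 ^ (M - (n - a)) * (M.choose (n - a)) * ((n - a).choose (j - a))) =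
      (x.choose a : ℝ) * (2 ^ (M - (n - a)) * (M.choose (n - a))) *
        (if n - a = 0 then 1 else 0) := by
    intro a ha
    simp only [Finset.mem_range] at ha
    rw [Finset.sum_Ico_eq_sum_range]
    have hr : n + 1 - a = (n - a) + 1 := by omega
    rw [hr, ← alt_sum (n - a), Finset.mul_sum]
    apply Finset.sum_congr rfl
    intro i hi
    simp only [Finset.mem_range] at hi
    have h1 : n - (a + i) = (n - a) - i := by omega
    have h2 : a + i - a = i := by omega
    rw [h1, h2]
    ring
  rw [Finset.sum_congr rfl inner]
  rw [Finset.sum_eq_single n]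
  · simp [mul_comm]
  · intro a ha hne
    simp only [Finset.mem_range] at ha
    rw [if_neg (by omega)]
    ring
  · intro h
    simp at h


/-- The Krawtchouk polynomial `K_{N,n}(x) = n! 2^{-n} ∑_{j=0}^n (-1)^{n-j} C(x,j) C(N-x,n-j)`. -/
noncomputable def krawtchouk (N n x : ℕ) : ℝ :=
  (n.factorial : ℝ) * (2 : ℝ) ^ (-(n : ℤ)) *
    ∑ j ∈ Finset.range (n + 1),
      (-1 : ℝ) ^ (n - j) * (x.choose j : ℝ) * ((N - x).choose (n - j) : ℝ)

/-- The Markov kernel `Λ̂_N` on `{0,…,N}`: `Λ̂_N(x,y) = 2^{x-N} C(N-x, y-x)` for `x ≤ y`,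
and `0` otherwise. -/
noncomputable def lamHat (N x y : ℕ) : ℝ :=
  if x ≤ y then (2 : ℝ) ^ ((x : ℤ) - (N : ℤ)) * (((N - x).choose (y - x)) : ℝ) else 0

/-- `Λ̂_N` maps the Krawtchouk polynomial `K_{N,n}` to `2^{-n} n! φ_n`, where
`φ_n(x) = C(x,n)`:
`∑_{y=x}^N 2^{x-N} C(N-x, y-x) K_{N,n}(y) = 2^{-n} n! C(x,n)`. -/
theorem lamHat_maps_krawtchouk (N n : ℕ) (hn : n ≤ N) (x : ℕ) (hx : x ≤ N) :
    ∑ y ∈ Finset.range (N + 1), lamHat N x y * krawtchouk N n y =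
      (2 : ℝ) ^ (-(n : ℤ)) * (n.factorial : ℝ) * (x.choose n : ℝ) := by
  set M := N - x with hMdef
  have hsplit : ∑ y ∈ Finset.range (N + 1), lamHat N x y * krawtchouk N n y
      = ∑ k ∈ Finset.range (M + 1), lamHat N x (x + k) * krawtchouk N n (x + k) := by
    rw [Finset.range_eq_Ico, ← Finset.sum_Ico_consecutive _ (Nat.zero_le x) (by omega)]
    have h0 : ∑ y ∈ Finset.Ico 0 x, lamHat N x y * krawtchouk N n y = 0 := by
      apply Finset.sum_eq_zero
      intro y hy
      simp only [Finset.mem_Ico] at hy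
      rw [lamHat, if_neg (by omega), zero_mul]
    rw [h0, zero_add, Finset.sum_Ico_eq_sum_range]
    have hr : N + 1 - x = M + 1 := by omega
    rw [hr, Finset.range_eq_Ico]
  rw [hsplit]
  have hterm : ∀ k ∈ Finset.range (M + 1),
      lamHat N x (x + k) * krawtchouk N n (x + k) =
      ((2 : ℝ) ^ ((x : ℤ) - N) * ((n.factorial : ℝ) * (2 : ℝ) ^ (-(n : ℤ)))) *
        ((M.choose k : ℝ) * ∑ j ∈ Finset.range (n + 1),
          (-1 : ℝ) ^ (n - j) * ((x + k).choose j : ℝ) * (((M - k).choose (n - j)) : ℝ)) := by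
    intro k hk
    simp only [Finset.mem_range] at hk
    rw [lamHat, if_pos (by omega), krawtchouk]
    have h1 : x + k - x = k := by omega
    have h2 : N - (x + k) = M - k := by omega
    rw [h1, h2]
    ring
  rw [Finset.sum_congr rfl hterm, ← Finset.mul_sum]
  have hkey : ∑ k ∈ Finset.range (M + 1),
      ((M.choose k : ℝ) * ∑ j ∈ Finset.range (n + 1),
        (-1 : ℝ) ^ (n - j) * ((x + k).choose j : ℝ) * (((M - k).choose (n - j)) : ℝ)) =
      2 ^ M * (x.choose n : ℝ) := by
    rw [← key M x n]
    apply Finset.sum_congr rfl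
    intro k _
    rw [Finset.mul_sum]
  rw [hkey]
  have h2M : (2 : ℝ) ^ ((x : ℤ) - N) * (2 : ℝ) ^ (M : ℕ) = 1 := by
    rw [← zpow_natCast (2 : ℝ) M, ← zpow_add₀ (two_ne_zero)]
    have hz : ((x : ℤ) - N) + (M : ℤ) = 0 := by
      rw [hMdef]
      push_cast [Nat.cast_sub hx]
      ring
    rw [hz, zpow_zero]
  calc (2 : ℝ) ^ ((x : ℤ) - N) * ((n.factorial : ℝ) * (2 : ℝ) ^ (-(n : ℤ))) *
        (2 ^ M * (x.choose n : ℝ))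
      = ((2 : ℝ) ^ ((x : ℤ) - N) * (2 : ℝ) ^ (M : ℕ)) *
        ((2 : ℝ) ^ (-(n : ℤ)) * (n.factorial : ℝ) * (x.choose n : ℝ)) := by ring
    _ = (2 : ℝ) ^ (-(n : ℤ)) * (n.factorial : ℝ) * (x.choose n : ℝ) := by
        rw [h2M, one_mul]
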